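/- Hardy inequality near infinity: let s > -1, let 0 < a < b, and f : [a,b] → ℝ be C¹. Then ∫_a^b x^{s} f(x)² dx ≤ (4/(s+1)²) ∫_a^b x^{s+2} f'(x)² dx + (2/(s+1)) b^{s+1} f(b)². -/

import Mathlib

open MeasureTheory Set

/-- Hardy inequality near infinity: for `s > -1`, `0 < a < b` and `f` of class `C¹`
on `[a,b]`,
`∫_a^b x^{s} f² ≤ (4/(s+1)²) ∫_a^b x^{s+2} (f')² + (2/(s+1)) b^{s+1} f(b)²`. -/
theorem stmt7 (s a b : ℝ) (hs : -1 < s) (ha : 0 < a) (hab : a < b)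
    (f : ℝ → ℝ) (hf : ContDiffOn ℝ 1 f (Set.Icc a b)) :
    (∫ x in a..b, x ^ s * (f x) ^ 2) ≤
      (4 / (s + 1) ^ 2) * (∫ x in a..b, x ^ (s + 2) * (deriv f x) ^ 2) +
        (2 / (s + 1)) * b ^ (s + 1) * (f b) ^ 2 := by
  have hc : (0:ℝ) < s + 1 := by linarith
  set c : ℝ := s + 1 with hcdef
  clear_value c
  have hab' : a ≤ b := hab.le
  have hpos : ∀ x ∈ Icc a b, (0:ℝ) < x := fun x hx => lt_of_lt_of_le ha hx.1
  set F : ℝ → ℝ := derivWithin f (Icc a b) with hFdef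
  have hFcont : ContinuousOn F (Icc a b) :=
    hf.continuousOn_derivWithin (uniqueDiffOn_Icc hab) le_rfl
  have hfc : ContinuousOn f (Icc a b) := hf.continuousOn
  have hderiv_eq : ∀ x ∈ Ioo a b, deriv f x = F x := by
    intro x hx
    have hnh : Icc a b ∈ nhds x := Icc_mem_nhds hx.1 hx.2
    rw [hFdef, derivWithin_of_mem_nhds hnh]
  have hdf : ∀ x ∈ Ioo a b, HasDerivAt f (F x) x := by
    intro x hx
    have hnh : Icc a b ∈ nhds x := Icc_mem_nhds hx.1 hx.2
    have hd := ((hf.differentiableOn one_ne_zero) x (Ioo_subset_Icc_self hx)).differentiableAt hnh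
    have := hd.hasDerivAt
    rwa [hderiv_eq x hx] at this
  -- continuity of power functions
  have hxp : ∀ q : ℝ, ContinuousOn (fun x : ℝ => x ^ q) (Icc a b) := by
    intro q x hx
    exact (Real.continuousAt_rpow_const x q (Or.inl (hpos x hx).ne')).continuousWithinAt
  -- the functions involved
  set G : ℝ → ℝ := fun x => x ^ s * f x ^ 2 + (2 / c) * (x ^ c * (f x * F x)) with hGdef
  set g : ℝ → ℝ := fun x => (1 / c) * (x ^ c * f x ^ 2) with hgdef
  have hcont1 : ContinuousOn (fun x : ℝ => x ^ s * f x ^ 2) (Icc a b) :=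
    (hxp s).mul (hfc.pow 2)
  have hcont2 : ContinuousOn (fun x : ℝ => x ^ c * (f x * F x)) (Icc a b) :=
    (hxp c).mul (hfc.mul hFcont)
  have hcontK : ContinuousOn (fun x : ℝ => x ^ (s + 2) * F x ^ 2) (Icc a b) :=
    (hxp (s + 2)).mul (hFcont.pow 2)
  have hGcont : ContinuousOn G (Icc a b) := hcont1.add (hcont2.const_smul (2 / c))
  have int1 : IntervalIntegrable (fun x : ℝ => x ^ s * f x ^ 2) volume a b :=
    hcont1.intervalIntegrable_of_Icc hab'
  have int2 : IntervalIntegrable (fun x : ℝ => x ^ c * (f x * F x)) volume a b :=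
    hcont2.intervalIntegrable_of_Icc hab'
  have intK : IntervalIntegrable (fun x : ℝ => x ^ (s + 2) * F x ^ 2) volume a b :=
    hcontK.intervalIntegrable_of_Icc hab'
  have intG : IntervalIntegrable G volume a b := hGcont.intervalIntegrable_of_Icc hab'
  -- FTC: ∫ G = g b - g a
  have hgderiv : ∀ x ∈ Ioo a b, HasDerivAt g (G x) x := by
    intro x hx
    have hx0 : (0:ℝ) < x := hpos x (Ioo_subset_Icc_self hx)
    have h1 : HasDerivAt (fun y : ℝ => y ^ c) (c * x ^ (c - 1)) x :=
      Real.hasDerivAt_rpow_const (Or.inl hx0.ne')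
    have h2 : HasDerivAt (fun y => f y ^ 2) (2 * f x ^ 1 * F x) x := (hdf x hx).pow 2
    have h3 := (h1.mul h2).const_mul (1 / c)
    have hcs : c - 1 = s := by rw [hcdef]; ring
    convert h3 using 1
    · rfl
    · rfl
    · rfl
    rw [hcs]
    have hc0 : c ≠ 0 := hc.ne'
    linear_combination (-(x ^ s * f x ^ 2)) * (mul_inv_cancel₀ hc0)
  have hgcont : ContinuousOn g (Icc a b) :=
    (((hxp c).mul (hfc.pow 2)).const_smul (1 / c))
  have hftc : (∫ x in a..b, G x) = g b - g a := by
    apply intervalIntegral.integral_eq_sub_of_hasDeriv_right_of_le hab' hgcont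
      (fun x hx => (hgderiv x hx).hasDerivWithinAt) intG
  -- split ∫ G
  set I1 : ℝ := ∫ x in a..b, x ^ s * f x ^ 2 with hI1
  set J : ℝ := ∫ x in a..b, x ^ c * (f x * F x) with hJ
  set K : ℝ := ∫ x in a..b, x ^ (s + 2) * F x ^ 2 with hK
  have hGsplit : (∫ x in a..b, G x) = I1 + (2 / c) * J := by
    rw [hGdef]
    rw [intervalIntegral.integral_add int1 (int2.const_mul (2 / c)),
      intervalIntegral.integral_const_mul]
  -- AM-GM pointwise bound and monotonicity
  have hbound : -((2 / c) * J) ≤ (1 / 2) * I1 + (2 / c ^ 2) * K := by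
    have hintL : IntervalIntegrable (fun x : ℝ => -(2 / c) * (x ^ c * (f x * F x))) volume a b :=
      int2.const_mul _
    have hintR : IntervalIntegrable
        (fun x : ℝ => (1:ℝ)/2 * (x ^ s * f x ^ 2) + 2 / c ^ 2 * (x ^ (s + 2) * F x ^ 2))
        volume a b := (int1.const_mul _).add (intK.const_mul _)
    have hmono : (∫ x in a..b, -(2 / c) * (x ^ c * (f x * F x))) ≤
        ∫ x in a..b, ((1:ℝ)/2 * (x ^ s * f x ^ 2) + 2 / c ^ 2 * (x ^ (s + 2) * F x ^ 2)) :=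
      intervalIntegral.integral_mono_on hab' hintL hintR
      (fun x hx => by
        have hx0 : (0:ℝ) < x := hpos x hx
        have hps : (0:ℝ) < x ^ s := Real.rpow_pos_of_pos hx0 s
        have hxc : x ^ c = x ^ s * x := by
          rw [hcdef, Real.rpow_add hx0, Real.rpow_one]
        have hx2 : x ^ (s + 2) = x ^ s * x ^ (2:ℕ) := by
          rw [Real.rpow_add hx0, Real.rpow_two]
        show -(2 / c) * (x ^ c * (f x * F x)) ≤
          (1:ℝ)/2 * (x ^ s * f x ^ 2) + 2 / c ^ 2 * (x ^ (s + 2) * F x ^ 2)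
        rw [hxc, hx2]
        have hc0 : c ≠ 0 := hc.ne'
        have expand : (1:ℝ)/2 * (x ^ s * f x ^ 2) + 2 / c ^ 2 * (x ^ s * x ^ (2:ℕ) * F x ^ 2)
            + 2 / c * (x ^ s * x * (f x * F x))
            = (1 / (2 * c ^ 2)) * (x ^ s * (c * f x + 2 * x * F x) ^ 2) := by
          field_simp
          ring
        have key : 0 ≤ (1 / (2 * c ^ 2)) * (x ^ s * (c * f x + 2 * x * F x) ^ 2) := by
          have := mul_nonneg hps.le (sq_nonneg (c * f x + 2 * x * F x))
          positivity
        linarith [expand, key]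
        )
    have hl : (∫ x in a..b, -(2 / c) * (x ^ c * (f x * F x))) = -((2 / c) * J) := by
      rw [intervalIntegral.integral_const_mul]; ring
    have hr : (∫ x in a..b, ((1:ℝ)/2 * (x ^ s * f x ^ 2) + 2 / c ^ 2 * (x ^ (s + 2) * F x ^ 2)))
        = (1 / 2) * I1 + (2 / c ^ 2) * K := by
      rw [intervalIntegral.integral_add (int1.const_mul _) (intK.const_mul _),
        intervalIntegral.integral_const_mul, intervalIntegral.integral_const_mul]
    calc -((2 / c) * J) = ∫ x in a..b, -(2 / c) * (x ^ c * (f x * F x)) := hl.symm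
      _ ≤ _ := hmono
      _ = (1 / 2) * I1 + (2 / c ^ 2) * K := hr
  -- replace K by the deriv-integral
  have hKeq : (∫ x in a..b, x ^ (s + 2) * (deriv f x) ^ 2) = K := by
    rw [hK]
    apply intervalIntegral.integral_congr_ae
    have hb0 : (volume : Measure ℝ) {b} = 0 := measure_singleton b
    filter_upwards [compl_mem_ae_iff.mpr hb0] with x hx hxI
    rw [uIoc_of_le hab'] at hxI
    have hxb : x ≠ b := by simpa using hx
    have hxoo : x ∈ Ioo a b := ⟨hxI.1, lt_of_le_of_ne hxI.2 hxb⟩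
    rw [hderiv_eq x hxoo]
  have hga : 0 ≤ g a := by
    rw [hgdef]
    have := Real.rpow_nonneg ha.le c
    positivity
  have hgb : g b = (1 / c) * (b ^ c * f b ^ 2) := rfl
  have hmain : I1 = g b - g a - (2 / c) * J := by
    rw [← hftc, hGsplit]; ring
  have hI1le : I1 ≤ 2 * g b + 2 * ((2 / c ^ 2) * K) := by
    have h1 : I1 ≤ g b - g a + ((1 / 2) * I1 + (2 / c ^ 2) * K) := by
      rw [hmain]; linarith [hbound]
    linarith [hga]
  rw [hKeq]
  have hgb2 : 2 * g b = 2 / c * b ^ c * f b ^ 2 := by rw [hgb]; ring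
  have h4 : (4:ℝ) / c ^ 2 * K = 2 * ((2 / c ^ 2) * K) := by ring
  linarith [hI1le]
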